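/- Let K be a convex body containing the unit ball, ε ∈ (0,1/2), and ℓ : K → [0,1] convex. Then the extension e(x) = π̄(x)·ℓ(x/π̄(x)) + (π̄(x)-1)/ε, with π̄(x) = max(1, π(x)/(1-ε)), is a convex function on R^d. -/

import Mathlib

open Metric Set Pointwise

section Aux

variable {E : Type*} [NormedAddCommGroup E] [NormedSpace ℝ E]

/-- Membership from gauge bound, for closed convex neighborhoods of zero. -/
lemma aux_mem_of_gauge_le_one {K : Set E} (hKcl : IsClosed K) (hKconv : Convex ℝ K)
    (hK0 : K ∈ nhds (0 : E)) {v : E} (hv : gauge K v ≤ 1) : v ∈ K := by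
  have := (gauge_le_one_iff_mem_closure hKconv hK0).1 hv
  rwa [hKcl.closure_eq] at this

/-- Key Lipschitz-type estimate for the perspective function. -/
lemma aux_key {K : Set E} (hKcl : IsClosed K) (hKconv : Convex ℝ K)
    (hK0 : K ∈ nhds (0 : E)) {ε : ℝ} (hε0 : 0 < ε) (hε1 : ε < 1)
    {ℓ : E → ℝ} (hconv : ConvexOn ℝ K ℓ) (h0 : ∀ x ∈ K, 0 ≤ ℓ x) (h1 : ∀ x ∈ K, ℓ x ≤ 1)
    {z : E} {μ1 μ2 : ℝ} (hμ1 : 1 ≤ μ1) (hg : gauge K z ≤ μ1 * (1 - ε)) (h12 : μ1 ≤ μ2) :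
    μ1 * ℓ (μ1⁻¹ • z) ≤ μ2 * ℓ (μ2⁻¹ • z) + (μ2 - μ1) / ε := by
  have hμ1p : (0 : ℝ) < μ1 := lt_of_lt_of_le one_pos hμ1
  have hμ2p : (0 : ℝ) < μ2 := lt_of_lt_of_le hμ1p h12
  have h1ε : (0 : ℝ) < 1 - ε := by linarith
  have hgnn : 0 ≤ gauge K z := gauge_nonneg z
  set D : ℝ := μ2 - μ1 * (1 - ε) with hD
  have hDge : ε * μ2 ≤ D := by nlinarith
  have hDpos : (0 : ℝ) < D := lt_of_lt_of_le (by positivity) hDge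
  set t : ℝ := ε * μ2 / D with ht
  have ht0 : 0 ≤ t := by positivity
  have ht1 : t ≤ 1 := by rw [ht, div_le_one hDpos]; linarith
  -- membership of the two auxiliary points
  have hx2K : μ2⁻¹ • z ∈ K := by
    apply aux_mem_of_gauge_le_one hKcl hKconv hK0
    rw [gauge_smul_of_nonneg (by positivity : (0:ℝ) ≤ μ2⁻¹), smul_eq_mul]
    rw [inv_mul_le_iff₀ hμ2p, mul_one]
    nlinarith
  have huK : ((1 - ε) * μ1)⁻¹ • z ∈ K := by
    apply aux_mem_of_gauge_le_one hKcl hKconv hK0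
    rw [gauge_smul_of_nonneg (by positivity : (0:ℝ) ≤ ((1 - ε) * μ1)⁻¹), smul_eq_mul]
    rw [inv_mul_le_iff₀ (by positivity), mul_one]
    linarith [hg]
  -- the convex combination identity
  have hscal : t * μ2⁻¹ + (1 - t) * ((1 - ε) * μ1)⁻¹ = μ1⁻¹ := by
    rw [ht]
    field_simp
    ring
  have hcomb : μ1⁻¹ • z = t • (μ2⁻¹ • z) + (1 - t) • (((1 - ε) * μ1)⁻¹ • z) := by
    rw [smul_smul, smul_smul, ← add_smul, hscal]
  have hconvineq := hconv.2 hx2K huK ht0 (by linarith : (0:ℝ) ≤ 1 - t) (by ring)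
  rw [← hcomb] at hconvineq
  simp only [smul_eq_mul] at hconvineq
  -- numeric facts
  have hl2nn : 0 ≤ ℓ (μ2⁻¹ • z) := h0 _ hx2K
  have hlu1 : ℓ (((1 - ε) * μ1)⁻¹ • z) ≤ 1 := h1 _ huK
  have hmt2 : μ1 * t ≤ μ2 := by
    rw [ht, ← mul_div_assoc, div_le_iff₀ hDpos]
    nlinarith [mul_nonneg hμ2p.le (sub_nonneg.2 h12)]
  have h1t : (1 - t) * D = (1 - ε) * (μ2 - μ1) := by
    rw [ht]; field_simp; ring
  have hmt3 : μ1 * (1 - t) ≤ (μ2 - μ1) / ε := by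
    rw [le_div_iff₀ hε0]
    have key : μ1 * (1 - t) * ε * D ≤ (μ2 - μ1) * D := by
      calc μ1 * (1 - t) * ε * D = μ1 * ε * ((1 - t) * D) := by ring
        _ = μ1 * ε * ((1 - ε) * (μ2 - μ1)) := by rw [h1t]
        _ ≤ (μ2 - μ1) * D := by nlinarith [mul_nonneg hε0.le (sub_nonneg.2 h12), mul_nonneg (mul_nonneg hε0.le hμ1p.le) (sub_nonneg.2 h12)]
    exact le_of_mul_le_mul_right key hDpos
  have step1 : μ1 * ℓ (μ1⁻¹ • z) ≤ μ1 * (t * ℓ (μ2⁻¹ • z) + (1 - t)) := by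
    apply mul_le_mul_of_nonneg_left _ hμ1p.le
    calc ℓ (μ1⁻¹ • z) ≤ t * ℓ (μ2⁻¹ • z) + (1 - t) * ℓ (((1 - ε) * μ1)⁻¹ • z) := hconvineq
      _ ≤ t * ℓ (μ2⁻¹ • z) + (1 - t) := by nlinarith
  calc μ1 * ℓ (μ1⁻¹ • z) ≤ μ1 * (t * ℓ (μ2⁻¹ • z) + (1 - t)) := step1
    _ = (μ1 * t) * ℓ (μ2⁻¹ • z) + μ1 * (1 - t) := by ring
    _ ≤ μ2 * ℓ (μ2⁻¹ • z) + (μ2 - μ1) / ε := by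
        have := mul_le_mul_of_nonneg_right hmt2 hl2nn
        linarith [hmt3]

end Aux

set_option maxHeartbeats 1000000 in
/-- The bandit extension `e(x) = π̄(x)·ℓ(x/π̄(x)) + (π̄(x)-1)/ε`, with
`π̄(x) = max 1 (gauge K x / (1-ε))`, is convex on all of `ℝ^d`. -/
theorem statement2 {d : ℕ} (K : Set (EuclideanSpace ℝ (Fin d)))
    (hKcomp : IsCompact K) (hKconv : Convex ℝ K)
    (hKint : (interior K).Nonempty) (hKball : closedBall (0 : EuclideanSpace ℝ (Fin d)) 1 ⊆ K)
    (ε : ℝ) (hε : ε ∈ Set.Ioo (0 : ℝ) (1/2))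
    (ℓ : EuclideanSpace ℝ (Fin d) → ℝ)
    (hℓconv : ConvexOn ℝ K ℓ) (hℓ01 : ∀ x ∈ K, ℓ x ∈ Set.Icc (0 : ℝ) 1) :
    ConvexOn ℝ Set.univ (fun x : EuclideanSpace ℝ (Fin d) =>
      (max 1 (gauge K x / (1 - ε))) * ℓ ((max 1 (gauge K x / (1 - ε)))⁻¹ • x)
        + (max 1 (gauge K x / (1 - ε)) - 1) / ε) := by
  obtain ⟨hε0, hε2⟩ := hε
  have hε1 : ε < 1 := by linarith
  have h1ε : (0 : ℝ) < 1 - ε := by linarith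
  have hK0 : K ∈ nhds (0 : EuclideanSpace ℝ (Fin d)) :=
    Filter.mem_of_superset (closedBall_mem_nhds 0 one_pos) hKball
  have hKcl : IsClosed K := hKcomp.isClosed
  have habs : Absorbent ℝ K := absorbent_nhds_zero hK0
  have h0 : ∀ v ∈ K, 0 ≤ ℓ v := fun v hv => (hℓ01 v hv).1
  have h1 : ∀ v ∈ K, ℓ v ≤ 1 := fun v hv => (hℓ01 v hv).2
  -- gauge facts
  have hgnn : ∀ v : EuclideanSpace ℝ (Fin d), 0 ≤ gauge K v := gauge_nonneg
  refine ⟨convex_univ, fun x _ y _ a b ha hb hab => ?_⟩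
  set px : ℝ := max 1 (gauge K x / (1 - ε)) with hpx
  set py : ℝ := max 1 (gauge K y / (1 - ε)) with hpy
  set z := a • x + b • y with hz
  set pz : ℝ := max 1 (gauge K z / (1 - ε)) with hpz
  set lam : ℝ := a * px + b * py with hlam
  have hpx1 : 1 ≤ px := le_max_left _ _
  have hpy1 : 1 ≤ py := le_max_left _ _
  have hpz1 : 1 ≤ pz := le_max_left _ _
  have hpxg : gauge K x ≤ px * (1 - ε) := by
    rw [← div_le_iff₀ h1ε]; exact le_max_right _ _
  have hpyg : gauge K y ≤ py * (1 - ε) := by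
    rw [← div_le_iff₀ h1ε]; exact le_max_right _ _
  have hpzg : gauge K z ≤ pz * (1 - ε) := by
    rw [← div_le_iff₀ h1ε]; exact le_max_right _ _
  have hlam1 : 1 ≤ lam := by
    have : a * 1 + b * 1 ≤ a * px + b * py := by
      apply add_le_add <;> apply mul_le_mul_of_nonneg_left <;> assumption
    simpa [hab] using this.trans_eq' (by linarith)
  have hlampos : (0 : ℝ) < lam := lt_of_lt_of_le one_pos hlam1
  -- Step 1 : pz ≤ lam
  have hgaugez : gauge K z ≤ a * gauge K x + b * gauge K y := by
    calc gauge K z ≤ gauge K (a • x) + gauge K (b • y) := gauge_add_le hKconv habs _ _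
      _ = a * gauge K x + b * gauge K y := by
          rw [gauge_smul_of_nonneg ha, gauge_smul_of_nonneg hb, smul_eq_mul, smul_eq_mul]
  have hpzlam : pz ≤ lam := by
    apply max_le hlam1
    rw [div_le_iff₀ h1ε]
    calc gauge K z ≤ a * gauge K x + b * gauge K y := hgaugez
      _ ≤ a * (px * (1 - ε)) + b * (py * (1 - ε)) := by
          apply add_le_add <;> apply mul_le_mul_of_nonneg_left <;> assumption
      _ = lam * (1 - ε) := by rw [hlam]; ring
  -- Step 2 : perspective monotonicity (key lemma)
  have hkey : pz * ℓ (pz⁻¹ • z) ≤ lam * ℓ (lam⁻¹ • z) + (lam - pz) / ε :=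
    aux_key hKcl hKconv hK0 hε0 hε1 hℓconv h0 h1 hpz1 hpzg hpzlam
  -- Step 3 : perspective convexity
  have hxK : px⁻¹ • x ∈ K := by
    apply aux_mem_of_gauge_le_one hKcl hKconv hK0
    rw [gauge_smul_of_nonneg (by positivity : (0:ℝ) ≤ px⁻¹), smul_eq_mul,
      inv_mul_le_iff₀ (by linarith : (0:ℝ) < px), mul_one]
    nlinarith
  have hyK : py⁻¹ • y ∈ K := by
    apply aux_mem_of_gauge_le_one hKcl hKconv hK0
    rw [gauge_smul_of_nonneg (by positivity : (0:ℝ) ≤ py⁻¹), smul_eq_mul,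
      inv_mul_le_iff₀ (by linarith : (0:ℝ) < py), mul_one]
    nlinarith
  have hpxpos : (0:ℝ) < px := lt_of_lt_of_le one_pos hpx1
  have hpypos : (0:ℝ) < py := lt_of_lt_of_le one_pos hpy1
  have hcomb : lam⁻¹ • z = (a * px / lam) • (px⁻¹ • x) + (b * py / lam) • (py⁻¹ • y) := by
    rw [hz, smul_add, smul_smul, smul_smul, smul_smul, smul_smul]
    congr 1 <;> congr 1 <;> field_simp <;> ring
  have hwsum : a * px / lam + b * py / lam = 1 := by
    field_simp [hlam]
    exact hlam.symm
  have hpersp : ℓ (lam⁻¹ • z) ≤ (a * px / lam) * ℓ (px⁻¹ • x) + (b * py / lam) * ℓ (py⁻¹ • y) := by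
    rw [hcomb]
    exact hℓconv.2 hxK hyK (by positivity) (by positivity) hwsum
  have hpersp' : lam * ℓ (lam⁻¹ • z) ≤ a * (px * ℓ (px⁻¹ • x)) + b * (py * ℓ (py⁻¹ • y)) := by
    have := mul_le_mul_of_nonneg_left hpersp hlampos.le
    calc lam * ℓ (lam⁻¹ • z)
        ≤ lam * ((a * px / lam) * ℓ (px⁻¹ • x) + (b * py / lam) * ℓ (py⁻¹ • y)) := this
      _ = a * (px * ℓ (px⁻¹ • x)) + b * (py * ℓ (py⁻¹ • y)) := by
          field_simp
  -- Combine everything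
  simp only [smul_eq_mul]
  have hlin : (lam - 1) / ε = a * ((px - 1) / ε) + b * ((py - 1) / ε) := by
    rw [hlam]
    have h2 : a * ((px - 1) / ε) + b * ((py - 1) / ε) = (a * (px - 1) + b * (py - 1)) / ε := by
      ring
    rw [h2, div_eq_div_iff hε0.ne' hε0.ne']
    linear_combination ε * hab
  have : pz * ℓ (pz⁻¹ • z) + (pz - 1) / ε ≤ lam * ℓ (lam⁻¹ • z) + (lam - 1) / ε := by
    have : (lam - pz) / ε + (pz - 1) / ε = (lam - 1) / ε := by field_simp; ring
    linarith [hkey]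
  calc pz * ℓ (pz⁻¹ • z) + (pz - 1) / ε
      ≤ lam * ℓ (lam⁻¹ • z) + (lam - 1) / ε := this
    _ ≤ (a * (px * ℓ (px⁻¹ • x)) + b * (py * ℓ (py⁻¹ • y))) + (lam - 1) / ε := by
        linarith [hpersp']
    _ = a * (px * ℓ (px⁻¹ • x) + (px - 1) / ε) + b * (py * ℓ (py⁻¹ • y) + (py - 1) / ε) := by
        rw [hlin]; ring
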